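/- arXiv:1107.5342 — 3 statements merged into one kernel-verified Lean document; each statement's English description precedes it below -/
import Mathlib

section
/- If G is a chordal graph and S is a minimal separator between two nonadjacent vertices a and b, then S is a clique. -/
/-- `S` separates `a` from `b` in `G`: neither endpoint is in `S` and every
walk from `a` to `b` passes through a vertex of `S`. -/
def Separates {V : Type*} (G : SimpleGraph V) (a b : V) (S : Set V) : Prop :=
  a ∉ S ∧ b ∉ S ∧ ∀ p : G.Walk a b, ∃ s ∈ S, s ∈ p.support

open SimpleGraph

private lemma exists_min_walk {α : Sort*} (Pp : α → Prop) (len : α → ℕ) (h : ∃ w, Pp w) :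
    ∃ w, Pp w ∧ ∀ w', Pp w' → len w ≤ len w' := by
  classical
  obtain ⟨w0, hw0⟩ := h
  have hne : ∃ n, ∃ w, Pp w ∧ len w = n := ⟨len w0, w0, hw0, rfl⟩
  obtain ⟨w, hw, hlen⟩ := Nat.find_spec hne
  exact ⟨w, hw, fun w' hw' => by rw [hlen]; exact Nat.find_le ⟨w', hw', rfl⟩⟩

private lemma edge_mem_of_length_one {V : Type*} {G : SimpleGraph V} {u v : V} (w : G.Walk u v)
    (h : w.length = 1) : s(u, v) ∈ w.edges := by
  cases w with
  | nil => simp at h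
  | cons h' r =>
    simp only [Walk.length_cons, Nat.add_eq_right, Nat.add_eq_zero] at h
    have h0 : r.length = 0 := by omega
    obtain rfl := r.eq_of_length_eq_zero h0
    simp

private lemma chord_of_min {V : Type*} {G : SimpleGraph V} {x y : V} (T : Set V)
    (w : G.Walk x y) (hT : ∀ z ∈ w.support, z ∈ T)
    (hmin : ∀ w' : G.Walk x y, (∀ z ∈ w'.support, z ∈ T) → w.length ≤ w'.length)
    {u v : V} (hu : u ∈ w.support) (hv : v ∈ w.support) (huv : G.Adj u v) :
    s(u, v) ∈ w.edges := by
  classical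
  have hlenw := congrArg Walk.length (w.take_spec hu)
  rw [Walk.length_append] at hlenw
  have hv' : v ∈ ((w.takeUntil u hu).append (w.dropUntil u hu)).support := by
    rw [w.take_spec hu]; exact hv
  rw [Walk.mem_support_append_iff] at hv'
  rcases hv' with hvt | hvd
  · set t : G.Walk x u := w.takeUntil u hu with ht
    have hlent := congrArg Walk.length (t.take_spec hvt)
    rw [Walk.length_append] at hlent
    let w' : G.Walk x y := (t.takeUntil v hvt).append (Walk.cons huv.symm (w.dropUntil u hu))
    have hT' : ∀ z ∈ w'.support, z ∈ T := by
      intro z hz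
      rw [Walk.mem_support_append_iff] at hz
      rcases hz with hz | hz
      · exact hT z (w.support_takeUntil_subset hu (t.support_takeUntil_subset hvt hz))
      · rw [Walk.support_cons] at hz
        rcases List.mem_cons.mp hz with rfl | hz
        · exact hT z (w.support_takeUntil_subset hu hvt)
        · exact hT z (w.support_dropUntil_subset hu hz)
    have hle := hmin w' hT'
    have hlw' : w'.length = (t.takeUntil v hvt).length + ((w.dropUntil u hu).length + 1) := by
      simp [w', Walk.length_append, Walk.length_cons]
    have hd1 : (t.dropUntil v hvt).length ≤ 1 := by omega
    interval_cases hdl : (t.dropUntil v hvt).length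
    · exact absurd (Walk.eq_of_length_eq_zero hdl).symm huv.ne
    · have := edge_mem_of_length_one _ hdl
      rw [Sym2.eq_swap] at this
      exact w.edges_takeUntil_subset hu (t.edges_dropUntil_subset hvt this)
  · set d : G.Walk u y := w.dropUntil u hu with hd
    have hlend := congrArg Walk.length (d.take_spec hvd)
    rw [Walk.length_append] at hlend
    let w' : G.Walk x y := (w.takeUntil u hu).append (Walk.cons huv (d.dropUntil v hvd))
    have hT' : ∀ z ∈ w'.support, z ∈ T := by
      intro z hz
      rw [Walk.mem_support_append_iff] at hz
      rcases hz with hz | hz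
      · exact hT z (w.support_takeUntil_subset hu hz)
      · rw [Walk.support_cons] at hz
        rcases List.mem_cons.mp hz with rfl | hz
        · exact hT z hu
        · exact hT z (w.support_dropUntil_subset hu (d.support_dropUntil_subset hvd hz))
    have hle := hmin w' hT'
    have hlw' : w'.length = (w.takeUntil u hu).length + ((d.dropUntil v hvd).length + 1) := by
      simp [w', Walk.length_append, Walk.length_cons]
    have hd1 : (d.takeUntil v hvd).length ≤ 1 := by omega
    interval_cases hdl : (d.takeUntil v hvd).length
    · exact absurd (Walk.eq_of_length_eq_zero hdl) huv.ne
    · have := edge_mem_of_length_one _ hdl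
      exact w.edges_dropUntil_subset hu (d.edges_takeUntil_subset hvd this)

private lemma separates_symm {V : Type*} {G : SimpleGraph V} {a b : V} {S : Set V}
    (h : Separates G a b S) : Separates G b a S := by
  refine ⟨h.2.1, h.1, fun p => ?_⟩
  obtain ⟨s, hs, hsp⟩ := h.2.2 p.reverse
  exact ⟨s, hs, by simpa [Walk.support_reverse] using hsp⟩

private lemma nbr_in_comp {V : Type*} {G : SimpleGraph V} {a b : V} {S : Set V}
    (hsep : Separates G a b S)
    (hmin : ∀ T : Set V, T ⊂ S → ¬ Separates G a b T) (z : V) (hz : z ∈ S) :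
    ∃ (u : V) (w : G.Walk a u), G.Adj z u ∧ ∀ v ∈ w.support, v ∉ S := by
  classical
  have hS' : S \ {z} ⊂ S := Set.sdiff_singleton_ssubset.mpr hz
  have hns := hmin _ hS'
  have hex : ∃ p : G.Walk a b, ∀ s ∈ S \ {z}, s ∉ p.support := by
    by_contra hcon
    push_neg at hcon
    exact hns ⟨fun h => hsep.1 h.1, fun h => hsep.2.1 h.1, hcon⟩
  obtain ⟨p, hp⟩ := hex
  have hp0 : ∀ s ∈ S \ {z}, s ∉ p.bypass.support := fun s hs hmem =>
    hp s hs (p.support_bypass_subset hmem)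
  obtain ⟨s, hsS, hsmem⟩ := hsep.2.2 p.bypass
  have hsz : s = z := by
    by_contra hne
    exact hp0 s ⟨hsS, hne⟩ hsmem
  subst hsz
  have hpath := p.bypass_isPath
  set q := p.bypass.takeUntil s hsmem with hq
  have hqpath : q.IsPath := hpath.takeUntil hsmem
  have hsa : s ≠ a := fun h => hsep.1 (h ▸ hsS)
  have hqnil : ¬ q.reverse.Nil := by
    rw [Walk.nil_iff_length_eq, Walk.length_reverse]
    intro h0
    exact hsa (Walk.eq_of_length_eq_zero h0).symm
  obtain ⟨u, hadj, r, hr⟩ := Walk.not_nil_iff.mp hqnil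
  refine ⟨u, r.reverse, hadj, ?_⟩
  intro v hv
  rw [Walk.support_reverse, List.mem_reverse] at hv
  have hvq : v ∈ q.support := by
    have : v ∈ q.reverse.support := by
      rw [hr, Walk.support_cons]
      exact List.mem_cons_of_mem _ hv
    rwa [Walk.support_reverse, List.mem_reverse] at this
  have hvz : v ≠ s := by
    intro hvz
    have hnodup : q.reverse.support.Nodup := by
      rw [Walk.support_reverse]
      exact List.nodup_reverse.mpr hqpath.support_nodup
    rw [hr, Walk.support_cons] at hnodup
    exact (List.nodup_cons.mp hnodup).1 (hvz ▸ hv)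
  intro hvS
  exact hp0 v ⟨hvS, hvz⟩ (p.bypass.support_takeUntil_subset hsmem hvq)

private lemma side_path {V : Type*} {G : SimpleGraph V} {a b : V} {S : Set V}
    (hsep : Separates G a b S) (hmin : ∀ T : Set V, T ⊂ S → ¬ Separates G a b T)
    {x y : V} (hx : x ∈ S) (hy : y ∈ S) (hxy : x ≠ y) (hadj : ¬ G.Adj x y) :
    ∃ P : G.Walk x y, P.IsPath ∧ 2 ≤ P.length ∧
      (∀ z ∈ P.support, z = x ∨ z = y ∨ (∃ w : G.Walk a z, ∀ z' ∈ w.support, z' ∉ S)) ∧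
      (∀ u v : V, u ∈ P.support → v ∈ P.support → G.Adj u v → s(u, v) ∈ P.edges) := by
  classical
  set A : Set V := {v | ∃ w : G.Walk a v, ∀ z ∈ w.support, z ∉ S} with hA
  have hAclosed : ∀ (v : V) (w : G.Walk a v), (∀ z ∈ w.support, z ∉ S) → ∀ z ∈ w.support, z ∈ A :=
    fun v w hw z hz => ⟨w.takeUntil z hz, fun z' hz' => hw z' (w.support_takeUntil_subset hz hz')⟩
  obtain ⟨ux, wux, hadjx, hwux⟩ := nbr_in_comp hsep hmin x hx
  obtain ⟨uy, wuy, hadjy, hwuy⟩ := nbr_in_comp hsep hmin y hy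
  have hconn : ∃ w : G.Walk ux uy, ∀ z ∈ w.support, z ∈ A := by
    refine ⟨wux.reverse.append wuy, ?_⟩
    intro z hz
    rw [Walk.mem_support_append_iff] at hz
    rcases hz with hz | hz
    · rw [Walk.support_reverse, List.mem_reverse] at hz
      exact hAclosed _ wux hwux z hz
    · exact hAclosed _ wuy hwuy z hz
  obtain ⟨wA, hwA⟩ := hconn
  set T : Set V := insert x (insert y A) with hT
  have hex : ∃ w : G.Walk x y, ∀ z ∈ w.support, z ∈ T := by
    refine ⟨Walk.cons hadjx (wA.append (Walk.cons hadjy.symm Walk.nil)), ?_⟩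
    intro z hz
    rw [Walk.support_cons, List.mem_cons] at hz
    rcases hz with rfl | hz
    · exact Set.mem_insert _ _
    · rw [Walk.mem_support_append_iff] at hz
      rcases hz with hz | hz
      · exact Set.mem_insert_of_mem _ (Set.mem_insert_of_mem _ (hwA z hz))
      · rw [Walk.support_cons, List.mem_cons] at hz
        rcases hz with rfl | hz
        · exact Set.mem_insert_of_mem _ (Set.mem_insert_of_mem _ (hAclosed _ wuy hwuy _ wuy.end_mem_support))
        · rw [Walk.support_nil, List.mem_singleton] at hz
          subst hz
          exact Set.mem_insert_of_mem _ (Set.mem_insert _ _)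
  obtain ⟨wm, hwm, hwmin⟩ := exists_min_walk (fun w : G.Walk x y => ∀ z ∈ w.support, z ∈ T)
    Walk.length hex
  have hPT : ∀ z ∈ wm.bypass.support, z ∈ T := fun z hz => hwm z (wm.support_bypass_subset hz)
  have hPmin : ∀ w' : G.Walk x y, (∀ z ∈ w'.support, z ∈ T) → wm.bypass.length ≤ w'.length :=
    fun w' hw' => le_trans wm.length_bypass_le (hwmin w' hw')
  have h2 : 2 ≤ wm.bypass.length := by
    rcases Nat.lt_or_ge wm.bypass.length 2 with h | h
    · interval_cases hbl : wm.bypass.length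
      · exact absurd (Walk.eq_of_length_eq_zero hbl) hxy
      · exact absurd (G.mem_edgeSet.mp
          (wm.bypass.edges_subset_edgeSet (edge_mem_of_length_one _ hbl))) hadj
    · exact h
  refine ⟨wm.bypass, wm.bypass_isPath, h2, ?_, ?_⟩
  · intro z hz
    have := hPT z hz
    rw [hT, Set.mem_insert_iff, Set.mem_insert_iff] at this
    rcases this with rfl | rfl | h
    · exact Or.inl rfl
    · exact Or.inr (Or.inl rfl)
    · exact Or.inr (Or.inr h)
  · intro u v hu hv huv
    exact chord_of_min T wm.bypass hPT hPmin hu hv huv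

/-- In a chordal graph, every minimal separator between two nonadjacent
vertices is a clique. -/
theorem chordal_minimal_separator_clique {V : Type*} [Fintype V]
    (G : SimpleGraph V)
    (hchordal : ∀ (u : V) (c : G.Walk u u), c.IsCycle → 4 ≤ c.length →
      ∃ x y : V, x ∈ c.support ∧ y ∈ c.support ∧ G.Adj x y ∧ s(x, y) ∉ c.edges)
    (a b : V) (hab : a ≠ b) (hnadj : ¬ G.Adj a b) (S : Set V)
    (hsep : Separates G a b S)
    (hmin : ∀ T : Set V, T ⊂ S → ¬ Separates G a b T) :
    ∀ x ∈ S, ∀ y ∈ S, x ≠ y → G.Adj x y := by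
  classical
  intro x hx y hy hxy
  by_contra hadj
  obtain ⟨P, hPpath, hPlen, hPsup, hPchord⟩ := side_path hsep hmin hx hy hxy hadj
  have hsepb := separates_symm hsep
  have hminb : ∀ T : Set V, T ⊂ S → ¬ Separates G b a T :=
    fun T hT hTb => hmin T hT (separates_symm hTb)
  obtain ⟨Q, hQpath, hQlen, hQsup, hQchord⟩ := side_path hsepb hminb hx hy hxy hadj
  have hAnotS : ∀ v : V, (∃ w : G.Walk a v, ∀ z ∈ w.support, z ∉ S) → v ∉ S := by
    rintro v ⟨w, hw⟩; exact hw v w.end_mem_support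
  have hBnotS : ∀ v : V, (∃ w : G.Walk b v, ∀ z ∈ w.support, z ∉ S) → v ∉ S := by
    rintro v ⟨w, hw⟩; exact hw v w.end_mem_support
  have hjoin : ∀ u v' : V, (∃ w : G.Walk a u, ∀ z ∈ w.support, z ∉ S) →
      (∃ w : G.Walk b v', ∀ z ∈ w.support, z ∉ S) →
      ∀ p : G.Walk u v', (∀ z ∈ p.support, z ∉ S) → False := by
    rintro u v' ⟨wa, hwa⟩ ⟨wb, hwb⟩ p hp
    obtain ⟨s, hsS, hsmem⟩ := hsep.2.2 (wa.append (p.append wb.reverse))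
    rw [Walk.mem_support_append_iff] at hsmem
    rcases hsmem with h | h
    · exact hwa s h hsS
    · rw [Walk.mem_support_append_iff] at h
      rcases h with h | h
      · exact hp s h hsS
      · rw [Walk.support_reverse, List.mem_reverse] at h
        exact hwb s h hsS
  have hABdisj : ∀ z : V, (∃ w : G.Walk a z, ∀ z' ∈ w.support, z' ∉ S) →
      (∃ w : G.Walk b z, ∀ z' ∈ w.support, z' ∉ S) → False := by
    intro z hzA hzB
    refine hjoin z z hzA hzB Walk.nil ?_
    intro z' hz'
    rw [Walk.support_nil, List.mem_singleton] at hz'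
    subst hz'
    exact hAnotS _ hzA
  have hABadj : ∀ u v' : V, (∃ w : G.Walk a u, ∀ z ∈ w.support, z ∉ S) →
      (∃ w : G.Walk b v', ∀ z ∈ w.support, z ∉ S) → ¬ G.Adj u v' := by
    intro u v' huA hvB h
    refine hjoin u v' huA hvB (Walk.cons h Walk.nil) ?_
    intro z hz
    rw [Walk.support_cons, List.mem_cons] at hz
    rcases hz with rfl | hz
    · exact hAnotS _ huA
    · rw [Walk.support_nil, List.mem_singleton] at hz
      subst hz
      exact hBnotS _ hvB
  set c : G.Walk x x := P.append Q.reverse with hc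
  have hclen : 4 ≤ c.length := by
    have hl : c.length = P.length + Q.length := by
      rw [hc, Walk.length_append, Walk.length_reverse]
    omega
  have hPtail : ∀ z ∈ P.support.tail, z ∈ P.support ∧ z ≠ x := by
    intro z hz
    refine ⟨by rw [P.support_eq_cons]; exact List.mem_cons_of_mem _ hz, ?_⟩
    have hnodup := hPpath.support_nodup
    rw [P.support_eq_cons] at hnodup
    intro hzx
    subst hzx
    exact (List.nodup_cons.mp hnodup).1 hz
  have hQrtail : ∀ z ∈ Q.reverse.support.tail, z ∈ Q.support ∧ z ≠ y := by
    intro z hz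
    have hmem : z ∈ Q.reverse.support := by
      rw [Q.reverse.support_eq_cons]; exact List.mem_cons_of_mem _ hz
    refine ⟨by rwa [Walk.support_reverse, List.mem_reverse] at hmem, ?_⟩
    have hnodup : Q.reverse.support.Nodup := hQpath.reverse.support_nodup
    rw [Q.reverse.support_eq_cons] at hnodup
    intro hzy
    subst hzy
    exact (List.nodup_cons.mp hnodup).1 hz
  have hcyc : c.IsCycle := by
    rw [Walk.isCycle_def]
    refine ⟨⟨?_⟩, ?_, ?_⟩
    · rw [hc, Walk.edges_append, List.nodup_append]
      refine ⟨hPpath.isTrail.edges_nodup, hQpath.reverse.isTrail.edges_nodup, ?_⟩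
      rintro e heP _ heQ rfl
      rw [Walk.edges_reverse, List.mem_reverse] at heQ
      induction e using Sym2.ind with
      | _ p q =>
        have hpq : G.Adj p q := G.mem_edgeSet.mp (P.edges_subset_edgeSet heP)
        have hpP := P.fst_mem_support_of_mem_edges heP
        have hqP := P.snd_mem_support_of_mem_edges heP
        have hpQ := Q.fst_mem_support_of_mem_edges heQ
        have hqQ := Q.snd_mem_support_of_mem_edges heQ
        have hpxy : p = x ∨ p = y := by
          rcases hPsup p hpP with h | h | h
          · exact Or.inl h
          · exact Or.inr h
          · rcases hQsup p hpQ with h' | h' | h'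
            · exact Or.inl h'
            · exact Or.inr h'
            · exact (hABdisj p h h').elim
        have hqxy : q = x ∨ q = y := by
          rcases hPsup q hqP with h | h | h
          · exact Or.inl h
          · exact Or.inr h
          · rcases hQsup q hqQ with h' | h' | h'
            · exact Or.inl h'
            · exact Or.inr h'
            · exact (hABdisj q h h').elim
        rcases hpxy with rfl | rfl <;> rcases hqxy with rfl | rfl
        · exact hpq.ne rfl
        · exact hadj hpq
        · exact hadj hpq.symm
        · exact hpq.ne rfl
    · intro hnil
      have h0 : c.length = 0 := by rw [hnil]; rfl
      omega
    · have hcs : c.support.tail = P.support.tail ++ Q.reverse.support.tail := by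
        rw [hc, Walk.support_append, P.support_eq_cons, List.cons_append, List.tail_cons]
        rfl
      rw [hcs, List.nodup_append]
      have hPn := hPpath.support_nodup
      rw [P.support_eq_cons] at hPn
      have hQn : Q.reverse.support.Nodup := hQpath.reverse.support_nodup
      rw [Q.reverse.support_eq_cons] at hQn
      refine ⟨(List.nodup_cons.mp hPn).2, (List.nodup_cons.mp hQn).2, ?_⟩
      rintro z hzP _ hzQ rfl
      obtain ⟨hzPs, hzx⟩ := hPtail z hzP
      obtain ⟨hzQs, hzy⟩ := hQrtail z hzQ
      rcases hPsup z hzPs with rfl | rfl | h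
      · exact hzx rfl
      · exact hzy rfl
      · rcases hQsup z hzQs with rfl | rfl | h'
        · exact hzx rfl
        · exact hzy rfl
        · exact hABdisj z h h'
  obtain ⟨p, q, hpc, hqc, hpq, hne⟩ := hchordal x c hcyc hclen
  have hcedges : ∀ e, e ∈ P.edges ∨ e ∈ Q.edges → e ∈ c.edges := by
    intro e he
    rw [hc, Walk.edges_append]
    rcases he with he | he
    · exact List.mem_append_left _ he
    · exact List.mem_append_right _ (by rw [Walk.edges_reverse, List.mem_reverse]; exact he)
  have hsupc : ∀ z ∈ c.support, z ∈ P.support ∨ z ∈ Q.support := by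
    intro z hz
    rw [hc, Walk.mem_support_append_iff] at hz
    rcases hz with hz | hz
    · exact Or.inl hz
    · rw [Walk.support_reverse, List.mem_reverse] at hz
      exact Or.inr hz
  have hclass : ∀ z ∈ c.support, z ∈ P.support ∨
      ((∃ w : G.Walk b z, ∀ z' ∈ w.support, z' ∉ S) ∧ z ∈ Q.support) := by
    intro z hz
    rcases hsupc z hz with hz' | hz'
    · exact Or.inl hz'
    · rcases hQsup z hz' with rfl | rfl | h
      · exact Or.inl P.start_mem_support
      · exact Or.inl P.end_mem_support
      · exact Or.inr ⟨h, hz'⟩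
  have hclass2 : ∀ z ∈ P.support, z ∈ Q.support ∨
      (∃ w : G.Walk a z, ∀ z' ∈ w.support, z' ∉ S) := by
    intro z hz
    rcases hPsup z hz with rfl | rfl | h
    · exact Or.inl Q.start_mem_support
    · exact Or.inl Q.end_mem_support
    · exact Or.inr h
  rcases hclass p hpc with hpP | ⟨hpB, hpQ⟩ <;> rcases hclass q hqc with hqP | ⟨hqB, hqQ⟩
  · exact hne (hcedges _ (Or.inl (hPchord p q hpP hqP hpq)))
  · rcases hclass2 p hpP with hpQ | hpA
    · exact hne (hcedges _ (Or.inr (hQchord p q hpQ hqQ hpq)))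
    · exact hABadj p q hpA hqB hpq
  · rcases hclass2 q hqP with hqQ | hqA
    · exact hne (hcedges _ (Or.inr (hQchord p q hpQ hqQ hpq)))
    · exact hABadj q p hqA hpB hpq.symm
  · exact hne (hcedges _ (Or.inr (hQchord p q hpQ hqQ hpq)))
end

section
/- If a graph G satisfies the property that every minimal separator between any two nonadjacent vertices is a clique, then every induced subgraph of G also satisfies this property. -/
/-- The property that every minimal separator between two nonadjacent vertices
is a clique. -/
def MinSepCliqueProp {V : Type*} (G : SimpleGraph V) : Prop :=
  ∀ a b : V, a ≠ b → ¬ G.Adj a b → ∀ S : Set V, Separates G a b S →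
    (∀ T : Set V, T ⊂ S → ¬ Separates G a b T) →
    ∀ x ∈ S, ∀ y ∈ S, x ≠ y → G.Adj x y

/-- Lift a walk whose support lies in `W` to a walk in the induced subgraph. -/
def liftWalk {V : Type*} (G : SimpleGraph V) (W : Set V) :
    ∀ {u v : V} (p : G.Walk u v) (hp : ∀ x ∈ p.support, x ∈ W),
      (G.induce W).Walk ⟨u, hp u p.start_mem_support⟩ ⟨v, hp v p.end_mem_support⟩
  | _, _, SimpleGraph.Walk.nil, _ => SimpleGraph.Walk.nil
  | u, v, SimpleGraph.Walk.cons huw q, hp =>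
      SimpleGraph.Walk.cons (by simpa using huw)
        (liftWalk G W q (fun x hx => hp x (by simp [hx])))

lemma liftWalk_support {V : Type*} (G : SimpleGraph V) (W : Set V) :
    ∀ {u v : V} (p : G.Walk u v) (hp : ∀ x ∈ p.support, x ∈ W),
      (liftWalk G W p hp).support.map Subtype.val = p.support
  | _, _, SimpleGraph.Walk.nil, _ => by simp [liftWalk]
  | u, v, SimpleGraph.Walk.cons huw q, hp => by
      simp [liftWalk, liftWalk_support G W q]

/-- The minimal-separators-are-cliques property is hereditary: it passes to
every induced subgraph. -/
theorem minSepCliqueProp_hereditary {V : Type*} [Fintype V] (G : SimpleGraph V)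
    (h : MinSepCliqueProp G) (W : Set V) :
    MinSepCliqueProp (G.induce W) := by
  classical
  intro a b hab hnadj S hS hSmin x hx y hy hxy
  obtain ⟨haS, hbS, hSsep⟩ := hS
  -- the big separator in G
  set Sv : Set V := Subtype.val '' S with hSv
  set Sbig : Set V := Sv ∪ Wᶜ with hSbig
  have haSbig : (a : V) ∉ Sbig := by
    rintro (⟨s, hsS, hs⟩ | hc)
    · exact haS (by rwa [Subtype.val_injective hs] at hsS)
    · exact hc a.2
  have hbSbig : (b : V) ∉ Sbig := by
    rintro (⟨s, hsS, hs⟩ | hc)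
    · exact hbS (by rwa [Subtype.val_injective hs] at hsS)
    · exact hc b.2
  have hSbigsep : Separates G a b Sbig := by
    refine ⟨haSbig, hbSbig, fun p => ?_⟩
    by_cases hpW : ∀ x ∈ p.support, x ∈ W
    · obtain ⟨s, hsS, hsp⟩ := hSsep (liftWalk G W p hpW)
      refine ⟨s, Or.inl ⟨s, hsS, rfl⟩, ?_⟩
      rw [← liftWalk_support G W p hpW]
      exact List.mem_map_of_mem hsp
    · push_neg at hpW
      obtain ⟨z, hzp, hzW⟩ := hpW
      exact ⟨z, Or.inr hzW, hzp⟩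
  -- find a minimal separator T ⊆ Sbig in G
  have hfin : {T : Set V | T ⊆ Sbig ∧ Separates G a b T}.Finite := Set.toFinite _
  obtain ⟨T, ⟨hTSbig, hTsep⟩, hTmin⟩ : ∃ T ∈ {T : Set V | T ⊆ Sbig ∧ Separates G a b T},
      ∀ T' ∈ {T : Set V | T ⊆ Sbig ∧ Separates G a b T}, id T' ≤ id T → id T = id T' := by
    obtain ⟨T, hT⟩ := hfin.exists_minimal ⟨Sbig, subset_rfl, hSbigsep⟩
    exact ⟨T, hT.1, fun T' h1 h2 => le_antisymm (hT.2 h1 h2) h2⟩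
  have hTmin' : ∀ T' : Set V, T' ⊂ T → ¬ Separates G a b T' := by
    intro T' hT' hsep'
    exact hT'.ne.symm (hTmin T' ⟨hT'.subset.trans hTSbig, hsep'⟩ hT'.subset)
  -- Sv ⊆ T
  have hSvT : Sv ⊆ T := by
    rintro _ ⟨s, hsS, rfl⟩
    by_contra hsT
    have hsub : (S \ {s} : Set ↥W) ⊂ S :=
      ⟨Set.diff_subset, fun hc => (hc hsS).2 rfl⟩
    have := hSmin (S \ {s}) hsub
    rw [Separates] at this
    push_neg at this
    obtain ⟨q, hq⟩ := this (fun hc => haS hc.1) (fun hc => hbS hc.1)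
    -- map q down to G
    let p := q.map (SimpleGraph.Embedding.induce W).toHom
    obtain ⟨t, htT, htp⟩ := hTsep.2.2 p
    have htp' : t ∈ q.support.map Subtype.val := by
      have htp2 : t ∈ (q.map (SimpleGraph.Embedding.induce W).toHom).support := htp
      rw [SimpleGraph.Walk.support_map] at htp2
      exact htp2
    obtain ⟨u, huq, rfl⟩ := List.mem_map.mp htp'
    rcases hTSbig htT with ⟨s', hs'S, hs'⟩ | hc
    · have : s' = u := Subtype.val_injective hs'
      subst this
      have : s' = s := by
        by_contra hne
        exact hq s' ⟨hs'S, hne⟩ huq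
      subst this
      exact hsT htT
    · exact hc u.2
  -- conclude
  have hxyV : (x : V) ≠ (y : V) := fun hc => hxy (Subtype.val_injective hc)
  have habV : (a : V) ≠ (b : V) := fun hc => hab (Subtype.val_injective hc)
  have hnadjV : ¬ G.Adj (a : V) (b : V) := fun hc => hnadj (by simpa using hc)
  have hadj := h a b habV hnadjV T hTsep hTmin'
    x (hSvT ⟨x, hx, rfl⟩) y (hSvT ⟨y, hy, rfl⟩) hxyV
  simpa using hadj
end

section
/- For real numbers δ₁,...,δₙ with |δᵢ| ≤ u for all i, where 0 ≤ u < 1 and nu ≤ α < 1, the product ∏ᵢ(1 + δᵢ) satisfies 1 − nu ≤ ∏ᵢ(1 + δᵢ) ≤ 1 + (1 + α)·n·u. -/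
lemma product_error_bound_aux (n : ℕ) (u α : ℝ) (hu0 : 0 ≤ u)
    (hα : (n : ℝ) * u ≤ α) (hα1 : α ≤ 1) :
    ∀ k, k ≤ n → (n : ℝ) * (1 + u) ^ k ≤ n + n * k * u + α * k ^ 2 * u := by
  intro k
  induction k with
  | zero => intro _; simp
  | succ k ih =>
    intro hk
    have hk' : k ≤ n := Nat.le_of_succ_le hk
    have ihk := ih hk'
    have hkn : (k : ℝ) ≤ n := Nat.cast_le.mpr hk'
    have hk0 : (0 : ℝ) ≤ k := Nat.cast_nonneg k
    have hn0 : (0 : ℝ) ≤ n := Nat.cast_nonneg n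
    have hα0 : 0 ≤ α := le_trans (mul_nonneg hn0 hu0) hα
    have hku : (k : ℝ) * u ≤ α := le_trans (by nlinarith) hα
    have hku1 : (k : ℝ) * u ≤ 1 := le_trans hku hα1
    have h1u : (0 : ℝ) ≤ 1 + u := by linarith
    have step : (n : ℝ) * (1 + u) ^ (k + 1) ≤ ((n : ℝ) + n * k * u + α * k ^ 2 * u) * (1 + u) := by
      rw [pow_succ, ← mul_assoc]
      exact mul_le_mul_of_nonneg_right ihk h1u
    have hkuu : (0:ℝ) ≤ k * u := mul_nonneg hk0 hu0
    have hh1 : (n:ℝ) * u * (k * u) ≤ α * (k * u) := mul_le_mul_of_nonneg_right hα hkuu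
    have hh2 : α * (k * u) * (k * u) ≤ α * (k * u) * 1 :=
      mul_le_mul_of_nonneg_left hku1 (mul_nonneg hα0 hkuu)
    have hh3 : (0:ℝ) ≤ α * u := mul_nonneg hα0 hu0
    push_cast
    nlinarith [hh1, hh2, hh3]

/-- Rounding-error product bound: if `|δᵢ| ≤ u` with `0 ≤ u < 1` and
`n·u ≤ α < 1`, then `1 − n·u ≤ ∏ᵢ (1 + δᵢ) ≤ 1 + (1 + α)·n·u`. -/
theorem product_error_bound (n : ℕ) (hn : 0 < n) (u α : ℝ)
    (hu0 : 0 ≤ u) (hu1 : u < 1) (hα : (n : ℝ) * u ≤ α) (hα1 : α < 1)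
    (δ : Fin n → ℝ) (hδ : ∀ i, |δ i| ≤ u) :
    1 - (n : ℝ) * u ≤ ∏ i, (1 + δ i) ∧
      ∏ i, (1 + δ i) ≤ 1 + (1 + α) * (n : ℝ) * u := by
  have hlo : ∀ i, 1 - u ≤ 1 + δ i := fun i => by
    have := abs_le.mp (hδ i); linarith [this.1]
  have hhi : ∀ i, 1 + δ i ≤ 1 + u := fun i => by
    have := abs_le.mp (hδ i); linarith [this.2]
  have h1u0 : (0 : ℝ) ≤ 1 - u := by linarith
  have hpos : ∀ i, (0 : ℝ) ≤ 1 + δ i := fun i => le_trans h1u0 (hlo i)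
  constructor
  · have hbern : 1 - (n : ℝ) * u ≤ (1 - u) ^ n := by
      have := one_add_mul_le_pow (a := -u) (by linarith) n
      have h : (1 : ℝ) + n * (-u) = 1 - n * u := by ring
      rw [h] at this
      simpa [sub_eq_add_neg] using this
    refine le_trans hbern ?_
    calc (1 - u) ^ n = ∏ _i : Fin n, (1 - u) := by
          rw [Finset.prod_const, Finset.card_univ, Fintype.card_fin]
      _ ≤ ∏ i, (1 + δ i) :=
          Finset.prod_le_prod (fun i _ => h1u0) (fun i _ => hlo i)
  · have hup : ∏ i, (1 + δ i) ≤ (1 + u) ^ n := by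
      calc ∏ i, (1 + δ i) ≤ ∏ _i : Fin n, (1 + u) :=
            Finset.prod_le_prod (fun i _ => hpos i) (fun i _ => hhi i)
        _ = (1 + u) ^ n := by
            rw [Finset.prod_const, Finset.card_univ, Fintype.card_fin]
    have haux := product_error_bound_aux n u α hu0 hα (le_of_lt hα1) n le_rfl
    have hn0 : (0 : ℝ) < n := Nat.cast_pos.mpr hn
    have : (1 + u) ^ n ≤ 1 + (1 + α) * n * u := by
      rw [← mul_le_mul_iff_right₀ hn0]
      nlinarith
    linarith
end
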